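/- (Uniform boundedness principle with weakened normality.) Let Y be equipped with a norm ‖·‖ and let Z ⊆ Y₊ be a cone that is a complete metric space in the metric induced by the norm of Y, such that |φ − ψ| ∈ Z for all φ, ψ ∈ Z and ‖φ‖ = ‖|φ|‖ for all φ ∈ Z − Z. Assume only that there exists a constant C > 0 such that ‖φ‖ ≤ C‖ψ‖ whenever φ ≤ ψ (pointwise), φ, ψ ∈ Z. Let 𝒜 be a set of subadditive and monotone mappings A : Z − Z → Y such that AZ ⊆ Z and such that each A ∈ 𝒜 is positively homogeneous on Z and continuous on Z. If for each φ ∈ Z there exists M_φ > 0 such that ‖Aφ‖ ≤ M_φ for all A ∈ 𝒜, then there exists M > 0 such that ‖A‖_LIP ≤ M for all A ∈ 𝒜. -/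

import Mathlib

/-- A copy of the subtype of a set, used to carry a custom metric structure without
clashing with instances inherited from the ambient type. -/
def ConeCopy {α : Type*} (Z : Set α) : Type _ := {x // x ∈ Z}

def ConeCopy.mk {α : Type*} {Z : Set α} (x : α) (h : x ∈ Z) : ConeCopy Z := ⟨x, h⟩

def ConeCopy.val {α : Type*} {Z : Set α} (x : ConeCopy Z) : α := Subtype.val x

theorem ConeCopy.mem {α : Type*} {Z : Set α} (x : ConeCopy Z) : x.val ∈ Z := Subtype.prop x

theorem ConeCopy.ext {α : Type*} {Z : Set α} {x y : ConeCopy Z} (h : x.val = y.val) : x = y :=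
  Subtype.ext h

theorem ConeCopy.val_mk {α : Type*} {Z : Set α} (x : α) (h : x ∈ Z) :
    (ConeCopy.mk x h).val = x := rfl

/-- Uniform boundedness principle with weakened normality: Let `Y ⊆ Ω → ℝ` be a linear subspace equipped
with a norm `nrm` whose positive cone is normal with constant `C > 0`, and let `Z ⊆ Y₊` be a cone
which is complete in the metric induced by the norm, with `|φ - ψ| ∈ Z` for `φ, ψ ∈ Z` and
`‖φ‖ = ‖|φ|‖` for `φ ∈ Z - Z`.  Let `𝒜` be a set of subadditive, monotone mappings
`A : Z - Z → Y` with `AZ ⊆ Z`, each positively homogeneous and continuous on `Z`.  If for each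
`φ ∈ Z` there is `M_φ > 0` with `‖Aφ‖ ≤ M_φ` for all `A ∈ 𝒜`, then there is `M > 0` with
`‖A‖_LIP ≤ M` for all `A ∈ 𝒜`, i.e. `‖Aφ - Aψ‖ ≤ M * ‖φ - ψ‖` for all `φ, ψ ∈ Z`, `A ∈ 𝒜`. -/
theorem uniform_boundedness_principle_weak_normality
    {Ω : Type*} [Nonempty Ω]
    (Y : Submodule ℝ (Ω → ℝ))
    -- the norm on `Y`
    (nrm : (Ω → ℝ) → ℝ)
    (hnrm_nonneg : ∀ φ ∈ Y, 0 ≤ nrm φ)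
    (hnrm_zero : ∀ φ ∈ Y, (nrm φ = 0 ↔ φ = 0))
    (hnrm_add : ∀ φ ∈ Y, ∀ ψ ∈ Y, nrm (φ + ψ) ≤ nrm φ + nrm ψ)
    (hnrm_smul : ∀ (c : ℝ), ∀ φ ∈ Y, nrm (c • φ) = |c| * nrm φ)
    -- `Z ⊆ Y₊` is a cone
    (Z : Set (Ω → ℝ))
    (hZY : ∀ φ ∈ Z, φ ∈ Y ∧ 0 ≤ φ)
    -- weakened normality: only `‖φ‖ ≤ C ‖ψ‖` whenever `φ ≤ ψ` (pointwise), `φ, ψ ∈ Z`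
    (C : ℝ) (hC : 0 < C)
    (hnormalZ : ∀ φ ∈ Z, ∀ ψ ∈ Z, φ ≤ ψ → nrm φ ≤ C * nrm ψ)
    (hZadd : ∀ φ ∈ Z, ∀ ψ ∈ Z, φ + ψ ∈ Z)
    (hZsmul : ∀ t : ℝ, 0 ≤ t → ∀ φ ∈ Z, t • φ ∈ Z)
    (hZabs : ∀ φ ∈ Z, ∀ ψ ∈ Z, |φ - ψ| ∈ Z)
    -- `‖φ‖ = ‖|φ|‖` for all `φ ∈ Z - Z`
    (hZnrmabs : ∀ χ, (∃ φ ∈ Z, ∃ ψ ∈ Z, χ = φ - ψ) → nrm χ = nrm |χ|)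
    -- `Z` is a complete metric space in the metric induced by the norm of `Y`
    (hZcomplete : ∀ u : ℕ → (Ω → ℝ), (∀ n, u n ∈ Z) →
      (∀ ε : ℝ, 0 < ε → ∃ N : ℕ, ∀ m ≥ N, ∀ n ≥ N, nrm (u m - u n) < ε) →
      ∃ φ ∈ Z, ∀ ε : ℝ, 0 < ε → ∃ N : ℕ, ∀ n ≥ N, nrm (u n - φ) < ε)
    -- `𝒜` is a set of mappings `A : Z - Z → Y`, each subadditive, monotone, with `AZ ⊆ Z`,
    -- positively homogeneous on `Z` and continuous on `Z`
    (𝒜 : Set ((Ω → ℝ) → (Ω → ℝ)))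
    (hAY : ∀ A ∈ 𝒜, ∀ χ, (∃ φ ∈ Z, ∃ ψ ∈ Z, χ = φ - ψ) → A χ ∈ Y)
    (hsub : ∀ A ∈ 𝒜, ∀ χ₁ χ₂, (∃ φ ∈ Z, ∃ ψ ∈ Z, χ₁ = φ - ψ) →
      (∃ φ ∈ Z, ∃ ψ ∈ Z, χ₂ = φ - ψ) → A (χ₁ + χ₂) ≤ A χ₁ + A χ₂)
    (hmono : ∀ A ∈ 𝒜, ∀ χ₁ χ₂, (∃ φ ∈ Z, ∃ ψ ∈ Z, χ₁ = φ - ψ) →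
      (∃ φ ∈ Z, ∃ ψ ∈ Z, χ₂ = φ - ψ) → χ₁ ≤ χ₂ → A χ₁ ≤ A χ₂)
    (hAZ : ∀ A ∈ 𝒜, ∀ φ ∈ Z, A φ ∈ Z)
    (hhom : ∀ A ∈ 𝒜, ∀ t : ℝ, 0 ≤ t → ∀ φ ∈ Z, A (t • φ) = t • A φ)
    (hcont : ∀ A ∈ 𝒜, ∀ φ ∈ Z, ∀ ε : ℝ, 0 < ε → ∃ δ : ℝ, 0 < δ ∧
      ∀ ψ ∈ Z, nrm (ψ - φ) < δ → nrm (A ψ - A φ) < ε)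
    -- pointwise boundedness of `𝒜`
    (hptwise : ∀ φ ∈ Z, ∃ Mφ : ℝ, 0 < Mφ ∧ ∀ A ∈ 𝒜, nrm (A φ) ≤ Mφ) :
    ∃ M : ℝ, 0 < M ∧ ∀ A ∈ 𝒜, ∀ φ ∈ Z, ∀ ψ ∈ Z, nrm (A φ - A ψ) ≤ M * nrm (φ - ψ) := by

  classical
  rcases Set.eq_empty_or_nonempty Z with hZe | ⟨ζ, hζ⟩
  · exact ⟨1, one_pos, fun A _ φ hφ => by rw [hZe] at hφ; exact absurd hφ (Set.notMem_empty φ)⟩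
  have h0Z : (0 : Ω → ℝ) ∈ Z := by
    have := hZsmul 0 le_rfl ζ hζ; simpa using this
  have hYmem : ∀ φ ∈ Z, φ ∈ Y := fun φ h => (hZY φ h).1
  have hZpos : ∀ φ ∈ Z, (0 : Ω → ℝ) ≤ φ := fun φ h => (hZY φ h).2
  have hrep : ∀ φ ∈ Z, ∃ a ∈ Z, ∃ b ∈ Z, φ = a - b :=
    fun φ h => ⟨φ, h, 0, h0Z, (sub_zero φ).symm⟩
  have hnrm_neg : ∀ φ ∈ Y, nrm (-φ) = nrm φ := by
    intro φ hφ
    have := hnrm_smul (-1) φ hφ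
    simpa using this
  have hnrm_sub_comm : ∀ φ ∈ Y, ∀ ψ ∈ Y, nrm (φ - ψ) = nrm (ψ - φ) := by
    intro φ hφ ψ hψ
    rw [show φ - ψ = -(ψ - φ) by ring, hnrm_neg _ (Y.sub_mem hψ hφ)]
  have hnrm0 : nrm (0 : Ω → ℝ) = 0 := (hnrm_zero 0 Y.zero_mem).mpr rfl
  letI : MetricSpace (ConeCopy Z) :=
    { dist := fun x y => nrm (x.val - y.val)
      dist_self := fun x => by simp only [sub_self]; exact hnrm0
      dist_comm := fun x y => hnrm_sub_comm _ (hYmem _ x.mem) _ (hYmem _ y.2)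
      dist_triangle := fun x y z => by
        have h := hnrm_add (x.val - y.val) (Y.sub_mem (hYmem _ x.mem) (hYmem _ y.2))
          (y.val - z.val) (Y.sub_mem (hYmem _ y.2) (hYmem _ z.2))
        simpa using h
      eq_of_dist_eq_zero := fun {x y} h => by
        have := (hnrm_zero (x.val - y.val) (Y.sub_mem (hYmem _ x.mem) (hYmem _ y.2))).mp h
        exact ConeCopy.ext (sub_eq_zero.mp this) }
  haveI : Nonempty (ConeCopy Z) := ⟨ConeCopy.mk ζ hζ⟩
  haveI : CompleteSpace (ConeCopy Z) := Metric.complete_of_cauchySeq_tendsto (by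
    intro u hu
    rw [Metric.cauchySeq_iff] at hu
    obtain ⟨φ, hφZ, hconv⟩ := hZcomplete (fun n => (u n).val) (fun n => (u n).mem)
      (fun ε hε => hu ε hε)
    refine ⟨ConeCopy.mk φ hφZ, ?_⟩
    rw [Metric.tendsto_atTop]
    intro ε hε
    obtain ⟨N, hN⟩ := hconv ε hε
    exact ⟨N, fun n hn => hN n hn⟩)
  set F : ℕ → Set (ConeCopy Z) := fun n => {x | ∀ A ∈ 𝒜, nrm (A x.val) ≤ (n : ℝ)} with hF
  have hFclosed : ∀ n, IsClosed (F n) := by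
    intro n
    have hEq : F n = ⋂ A ∈ 𝒜, {x : ConeCopy Z | nrm (A x.val) ≤ (n : ℝ)} := by
      ext x; simp [hF]
    rw [hEq]
    refine isClosed_biInter fun A hA => ?_
    have hcontA : Continuous fun x : ConeCopy Z => nrm (A x.val) := by
      rw [Metric.continuous_iff]
      intro b ε hε
      obtain ⟨δ, hδ, hδ'⟩ := hcont A hA b.val b.mem ε hε
      refine ⟨δ, hδ, fun a ha => ?_⟩
      have h1 := hδ' a.val a.mem ha
      have hAa : A a.val ∈ Y := hYmem _ (hAZ A hA a.val a.mem)
      have hAb : A b.val ∈ Y := hYmem _ (hAZ A hA b.val b.mem)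
      rw [Real.dist_eq]
      have t1 : nrm (A a.val) ≤ nrm (A a.val - A b.val) + nrm (A b.val) := by
        have h := hnrm_add (A a.val - A b.val) (Y.sub_mem hAa hAb) (A b.val) hAb
        simpa using h
      have t2 : nrm (A b.val) ≤ nrm (A b.val - A a.val) + nrm (A a.val) := by
        have h := hnrm_add (A b.val - A a.val) (Y.sub_mem hAb hAa) (A a.val) hAa
        simpa using h
      have t3 : nrm (A b.val - A a.val) = nrm (A a.val - A b.val) :=
        hnrm_sub_comm _ hAb _ hAa
      rw [abs_sub_lt_iff]
      constructor <;> linarith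
    exact isClosed_le hcontA continuous_const
  have hFcover : ⋃ n, F n = Set.univ := by
    ext x
    simp only [Set.mem_iUnion, Set.mem_univ, iff_true]
    obtain ⟨Mφ, _, hbd⟩ := hptwise x.val x.mem
    exact ⟨⌈Mφ⌉₊, fun A hA => (hbd A hA).trans (Nat.le_ceil Mφ)⟩
  obtain ⟨n, x₀, hx₀⟩ := nonempty_interior_of_iUnion_of_closed hFclosed hFcover
  obtain ⟨r, hr, hball⟩ := Metric.isOpen_iff.mp isOpen_interior x₀ hx₀
  have hball' : ∀ ψ ∈ Z, nrm (ψ - x₀.val) < r → ∀ A ∈ 𝒜, nrm (A ψ) ≤ (n : ℝ) := by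
    intro ψ hψ h A hA
    have hmem : ConeCopy.mk ψ hψ ∈ Metric.ball x₀ r := h
    exact interior_subset (hball hmem) A hA
  -- key estimate on the cone
  have key : ∀ A ∈ 𝒜, ∀ χ ∈ Z, nrm (A χ) ≤ (2 * C * ((n : ℝ) + 1) / r) * nrm χ := by
    intro A hA χ hχ
    by_cases h0 : nrm χ = 0
    · have hχ0 : χ = 0 := (hnrm_zero χ (hYmem χ hχ)).mp h0
      have hA0 : A χ = 0 := by
        have h := hhom A hA 0 le_rfl χ hχ
        rw [hχ0] at h ⊢
        simpa using h
      rw [hA0, h0, mul_zero, hnrm0]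
    · have hχpos : 0 < nrm χ := lt_of_le_of_ne (hnrm_nonneg χ (hYmem χ hχ)) (Ne.symm h0)
      set t := r / (2 * nrm χ) with ht
      have htpos : 0 < t := div_pos hr (by positivity)
      have htχZ : t • χ ∈ Z := hZsmul t htpos.le χ hχ
      have hψZ : x₀.val + t • χ ∈ Z := hZadd _ x₀.mem _ htχZ
      have hnrmtχ : nrm (t • χ) = t * nrm χ := by
        rw [hnrm_smul t χ (hYmem χ hχ), abs_of_pos htpos]
      have htmul : t * nrm χ = r / 2 := by
        rw [ht]; field_simp
      have hdist : nrm ((x₀.val + t • χ) - x₀.val) < r := by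
        rw [add_sub_cancel_left, hnrmtχ, htmul]
        linarith
      have hboundψ : nrm (A (x₀.val + t • χ)) ≤ (n : ℝ) := hball' _ hψZ hdist A hA
      have hle : t • χ ≤ x₀.val + t • χ := le_add_of_nonneg_left (hZpos _ x₀.mem)
      have hmono' : A (t • χ) ≤ A (x₀.val + t • χ) :=
        hmono A hA _ _ (hrep _ htχZ) (hrep _ hψZ) hle
      have h1 : nrm (A (t • χ)) ≤ C * nrm (A (x₀.val + t • χ)) :=
        hnormalZ _ (hAZ A hA _ htχZ) _ (hAZ A hA _ hψZ) hmono'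
      have h2 : nrm (A (t • χ)) = t * nrm (A χ) := by
        rw [hhom A hA t htpos.le χ hχ, hnrm_smul t _ (hYmem _ (hAZ A hA χ hχ)),
          abs_of_pos htpos]
      have h3 : t * nrm (A χ) ≤ C * ((n : ℝ) + 1) := by
        have hb : nrm (A (x₀.val + t • χ)) ≤ (n : ℝ) + 1 := by linarith
        have := mul_le_mul_of_nonneg_left hb hC.le
        rw [← h2]
        linarith
      have hfin : nrm (A χ) ≤ C * ((n : ℝ) + 1) / t := by
        rw [le_div_iff₀ htpos]
        linarith
      have heq : C * ((n : ℝ) + 1) / t = 2 * C * ((n : ℝ) + 1) / r * nrm χ := by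
        rw [ht]; field_simp
      rw [heq] at hfin
      exact hfin
  refine ⟨C * (2 * C * ((n : ℝ) + 1) / r), by positivity, fun A hA φ hφ ψ hψ => ?_⟩
  set χ := |φ - ψ| with hχdef
  have hχZ : χ ∈ Z := hZabs φ hφ ψ hψ
  have hφle : φ ≤ ψ + χ := by
    rw [Pi.le_def]
    intro ω
    have h := le_abs_self ((φ - ψ) ω)
    simp only [Pi.sub_apply] at h
    simp only [hχdef, Pi.add_apply, Pi.abs_apply, Pi.sub_apply]
    linarith
  have hψle : ψ ≤ φ + χ := by
    rw [Pi.le_def]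
    intro ω
    have h := neg_abs_le ((φ - ψ) ω)
    simp only [Pi.sub_apply] at h
    simp only [hχdef, Pi.add_apply, Pi.abs_apply, Pi.sub_apply]
    linarith
  have hm1 : A φ ≤ A (ψ + χ) :=
    hmono A hA φ (ψ + χ) (hrep φ hφ) (hrep _ (hZadd ψ hψ χ hχZ)) hφle
  have hs1 : A (ψ + χ) ≤ A ψ + A χ := hsub A hA ψ χ (hrep ψ hψ) (hrep χ hχZ)
  have hm2 : A ψ ≤ A (φ + χ) :=
    hmono A hA ψ (φ + χ) (hrep ψ hψ) (hrep _ (hZadd φ hφ χ hχZ)) hψle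
  have hs2 : A (φ + χ) ≤ A φ + A χ := hsub A hA φ χ (hrep φ hφ) (hrep χ hχZ)
  have habs_le : |A φ - A ψ| ≤ A χ := by
    rw [Pi.le_def]
    intro ω
    have h1 := (Pi.le_def.mp hm1) ω
    have h1' := (Pi.le_def.mp hs1) ω
    have h2 := (Pi.le_def.mp hm2) ω
    have h2' := (Pi.le_def.mp hs2) ω
    simp only [Pi.add_apply] at h1 h1' h2 h2'
    simp only [Pi.abs_apply, Pi.sub_apply]
    rw [abs_le]
    constructor <;> linarith
  have hAabsZ : |A φ - A ψ| ∈ Z := hZabs (A φ) (hAZ A hA φ hφ) (A ψ) (hAZ A hA ψ hψ)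
  have e1 : nrm (A φ - A ψ) = nrm |A φ - A ψ| :=
    hZnrmabs _ ⟨A φ, hAZ A hA φ hφ, A ψ, hAZ A hA ψ hψ, rfl⟩
  have e2 : nrm (φ - ψ) = nrm |φ - ψ| := hZnrmabs _ ⟨φ, hφ, ψ, hψ, rfl⟩
  have b1 : nrm |A φ - A ψ| ≤ C * nrm (A χ) :=
    hnormalZ _ hAabsZ _ (hAZ A hA χ hχZ) habs_le
  have b2 : nrm (A χ) ≤ 2 * C * ((n : ℝ) + 1) / r * nrm χ := key A hA χ hχZ
  rw [e1, e2, ← hχdef]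
  calc nrm |A φ - A ψ| ≤ C * nrm (A χ) := b1
    _ ≤ C * (2 * C * ((n : ℝ) + 1) / r * nrm χ) :=
        mul_le_mul_of_nonneg_left b2 hC.le
    _ = C * (2 * C * ((n : ℝ) + 1) / r) * nrm χ := by ring
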